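/- Let n ≥ 2. Then the image ψ(B_n) of Wada's representation of type (2) and the image χ(B_n) of Wada's representation of type (3) are different subgroups of Aut(F_n). -/

import Mathlib

/-- The defining relations of the braid group on `m + 1` strands (`m` generators
`σ_1, …, σ_m`, indexed here by `Fin m`): the commutation relations
`σ_i σ_j = σ_j σ_i` for `|i - j| > 1` and the braid relations
`σ_i σ_{i+1} σ_i = σ_{i+1} σ_i σ_{i+1}`. -/
def braidRels (m : ℕ) : Set (FreeGroup (Fin m)) :=
  {r | (∃ i j : Fin m, (i : ℕ) + 1 < (j : ℕ) ∧
        r = FreeGroup.of i * FreeGroup.of j * (FreeGroup.of i)⁻¹ * (FreeGroup.of j)⁻¹) ∨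
       (∃ i j : Fin m, (i : ℕ) + 1 = (j : ℕ) ∧
        r = FreeGroup.of i * FreeGroup.of j * FreeGroup.of i *
            (FreeGroup.of j * FreeGroup.of i * FreeGroup.of j)⁻¹)}

/-- The index in `Fin n` of the generator `x_i` of `F_n` acted on by `σ_i`
(the strand index `i`, `0`-based). -/
def xL (n : ℕ) (i : Fin (n - 1)) : Fin n := ⟨i, by have := i.isLt; omega⟩

/-- The index in `Fin n` of the generator `x_{i+1}` of `F_n` acted on by `σ_i`. -/
def xR (n : ℕ) (i : Fin (n - 1)) : Fin n := ⟨(i : ℕ) + 1, by have := i.isLt; omega⟩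
/-- For `n ≥ 2`, the image of Wada's type (2) representation `ψ` and the image of
Wada's type (3) representation `χ` of `B_n` are different subgroups of `Aut(F_n)`. -/
theorem wada_type2_type3_images_distinct (n : ℕ) (hn : 2 ≤ n)
    (ψ χ : PresentedGroup (braidRels (n - 1)) →* MulAut (FreeGroup (Fin n)))
    (hψ : ∀ i : Fin (n - 1),
      (ψ (PresentedGroup.of i)) (FreeGroup.of (xL n i)) =
          FreeGroup.of (xL n i) * (FreeGroup.of (xR n i))⁻¹ * FreeGroup.of (xL n i) ∧
      (ψ (PresentedGroup.of i)) (FreeGroup.of (xR n i)) = FreeGroup.of (xL n i) ∧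
      ∀ j : Fin n, j ≠ xL n i → j ≠ xR n i →
        (ψ (PresentedGroup.of i)) (FreeGroup.of j) = FreeGroup.of j)
    (hχ : ∀ i : Fin (n - 1),
      (χ (PresentedGroup.of i)) (FreeGroup.of (xL n i)) =
          FreeGroup.of (xL n i) ^ 2 * FreeGroup.of (xR n i) ∧
      (χ (PresentedGroup.of i)) (FreeGroup.of (xR n i)) =
          (FreeGroup.of (xR n i))⁻¹ * (FreeGroup.of (xL n i))⁻¹ * FreeGroup.of (xR n i) ∧
      ∀ j : Fin n, j ≠ xL n i → j ≠ xR n i →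
        (χ (PresentedGroup.of i)) (FreeGroup.of j) = FreeGroup.of j) :
    ψ.range ≠ χ.range := by
  set ε : FreeGroup (Fin n) →* Multiplicative ℤ :=
    FreeGroup.lift (fun _ => Multiplicative.ofAdd (1 : ℤ)) with hε
  set S : Subgroup (MulAut (FreeGroup (Fin n))) :=
    { carrier := {φ | ∀ x, ε (φ x) = ε x}
      one_mem' := fun x => rfl
      mul_mem' := by
        intro a b ha hb x
        have : (a * b) x = a (b x) := rfl
        rw [this, ha, hb]
      inv_mem' := by
        intro a ha x
        have := ha (a⁻¹ x)
        rw [MulAut.inv_def, MulEquiv.apply_symm_apply] at this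
        exact this.symm } with hS
  have hle : Subgroup.closure (Set.range PresentedGroup.of) ≤ Subgroup.comap ψ S := by
    rw [Subgroup.closure_le]
    rintro _ ⟨i, rfl⟩
    show ∀ x, ε ((ψ (PresentedGroup.of i)) x) = ε x
    have key : ε.comp (ψ (PresentedGroup.of i)).toMonoidHom = ε := by
      apply FreeGroup.ext_hom
      intro j
      simp only [MonoidHom.comp_apply, MulEquiv.coe_toMonoidHom]
      obtain ⟨h1, h2, h3⟩ := hψ i
      by_cases hjL : j = xL n i
      · subst hjL
        rw [h1]
        simp [hε]
      · by_cases hjR : j = xR n i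
        · subst hjR
          rw [h2]
          simp [hε]
        · rw [h3 j hjL hjR]
    intro x
    exact DFunLike.congr_fun key x
  have hrange : ψ.range ≤ S := by
    rintro y ⟨g, rfl⟩
    exact hle (by rw [PresentedGroup.closure_range_of]; trivial)
  intro hEq
  have hn1 : 0 < n - 1 := by omega
  set i0 : Fin (n - 1) := ⟨0, hn1⟩ with hi0
  have hmem : χ (PresentedGroup.of i0) ∈ S := by
    apply hrange
    rw [hEq]
    exact ⟨PresentedGroup.of i0, rfl⟩
  have hx := hmem (FreeGroup.of (xL n i0))
  obtain ⟨h1, -, -⟩ := hχ i0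
  rw [h1] at hx
  simp [hε] at hx
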